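/- (Negativity of the weighted Rayleigh quotient under a doubling bound.) Let n ≥ 1 and set R_d = 2^{n+4}. Let μ be a Radon measure on ℝ^{n+1} satisfying μ(B_{R_d/2}) > 0 and μ(B_{R_d}) ≤ 2^{2n+3} μ(B_{R_d/2}). Then, with φ(x) = 1 for |x| < R_d/2, φ(x) = 2 − (2/R_d)|x| for R_d/2 ≤ |x| < R_d, and φ(x) = 0 for |x| ≥ R_d, one has (4/R_d²) ∫_{B_{R_d} \ B_{R_d/2}} Φ dμ − (1/2) ∫ φ² Φ dμ ≤ (2^{2n+5}/R_d² − 1/2) e^{−R_d²/16} μ(B_{R_d/2}) < 0. -/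

import Mathlib

open MeasureTheory Metric

/-- The Gaussian weight `Φ(x) = exp(-|x|²/4)` on `ℝ^{n+1}`. -/
noncomputable def Phi (n : ℕ) (x : EuclideanSpace ℝ (Fin (n + 1))) : ℝ :=
  Real.exp (-‖x‖ ^ 2 / 4)

/-- The radial cutoff function `φ` at scale `R_d`: equal to `1` on `B_{R_d/2}`, affinely
interpolating to `0` on the annulus `B_{R_d} \ B_{R_d/2}`, and `0` outside `B_{R_d}`. -/
noncomputable def cutoff (n : ℕ) (Rd : ℝ) (x : EuclideanSpace ℝ (Fin (n + 1))) : ℝ :=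
  if ‖x‖ < Rd / 2 then 1
  else if ‖x‖ < Rd then 2 - (2 / Rd) * ‖x‖
  else 0

lemma Phi_pos (n : ℕ) (x : EuclideanSpace ℝ (Fin (n + 1))) : 0 < Phi n x :=
  Real.exp_pos _

lemma Phi_le_one (n : ℕ) (x : EuclideanSpace ℝ (Fin (n + 1))) : Phi n x ≤ 1 := by
  rw [Phi, ← Real.exp_zero]
  apply Real.exp_le_exp.2
  nlinarith [sq_nonneg ‖x‖]

lemma Phi_cont (n : ℕ) : Continuous (Phi n) := by
  unfold Phi; fun_prop

lemma cutoff_meas (n : ℕ) (Rd : ℝ) : Measurable (cutoff n Rd) := by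
  unfold cutoff
  exact Measurable.ite (measurableSet_lt measurable_norm measurable_const) measurable_const
    (Measurable.ite (measurableSet_lt measurable_norm measurable_const)
      (measurable_const.sub (measurable_const.mul measurable_norm)) measurable_const)

lemma cutoff_nonneg (n : ℕ) (Rd : ℝ) (hRd : 0 < Rd) (x : EuclideanSpace ℝ (Fin (n + 1))) :
    0 ≤ cutoff n Rd x := by
  unfold cutoff
  split_ifs with h1 h2
  · norm_num
  · have h4 : 2 / Rd * ‖x‖ < 2 := by
      rw [div_mul_eq_mul_div, div_lt_iff₀ hRd]; linarith
    linarith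
  · exact le_refl 0

theorem rayleigh_negative_of_doubling (n : ℕ) (hn : 1 ≤ n)
    (μ : Measure (EuclideanSpace ℝ (Fin (n + 1)))) [IsLocallyFiniteMeasure μ]
    (hpos : 0 < μ (ball (0 : EuclideanSpace ℝ (Fin (n + 1))) ((2 : ℝ) ^ (n + 4) / 2)))
    (hdoub : μ (ball (0 : EuclideanSpace ℝ (Fin (n + 1))) ((2 : ℝ) ^ (n + 4))) ≤
      2 ^ (2 * n + 3) *
        μ (ball (0 : EuclideanSpace ℝ (Fin (n + 1))) ((2 : ℝ) ^ (n + 4) / 2))) :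
    (4 / ((2 : ℝ) ^ (n + 4)) ^ 2) *
        (∫ x in ball (0 : EuclideanSpace ℝ (Fin (n + 1))) ((2 : ℝ) ^ (n + 4)) \
          ball (0 : EuclideanSpace ℝ (Fin (n + 1))) ((2 : ℝ) ^ (n + 4) / 2),
          Phi n x ∂μ) -
      (1 / 2) * (∫ x, (cutoff n ((2 : ℝ) ^ (n + 4)) x) ^ 2 * Phi n x ∂μ) ≤
      ((2 : ℝ) ^ (2 * n + 5) / ((2 : ℝ) ^ (n + 4)) ^ 2 - 1 / 2) *
        Real.exp (-((2 : ℝ) ^ (n + 4)) ^ 2 / 16) *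
        (μ (ball (0 : EuclideanSpace ℝ (Fin (n + 1))) ((2 : ℝ) ^ (n + 4) / 2))).toReal ∧
    ((2 : ℝ) ^ (2 * n + 5) / ((2 : ℝ) ^ (n + 4)) ^ 2 - 1 / 2) *
        Real.exp (-((2 : ℝ) ^ (n + 4)) ^ 2 / 16) *
        (μ (ball (0 : EuclideanSpace ℝ (Fin (n + 1))) ((2 : ℝ) ^ (n + 4) / 2))).toReal
      < 0 := by
  have hmem : ∀ y : EuclideanSpace ℝ (Fin (n+1)), ∀ r : ℝ,
      (y ∈ ball (0 : EuclideanSpace ℝ (Fin (n+1))) r ↔ ‖y‖ < r) := by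
    intro y r; simp [mem_ball, dist_eq_norm]
  set Rd : ℝ := (2:ℝ)^(n+4) with hRdDef
  have hRd : (0:ℝ) < Rd := by positivity
  set B1 := ball (0 : EuclideanSpace ℝ (Fin (n+1))) (Rd/2) with hB1def
  set B2 := ball (0 : EuclideanSpace ℝ (Fin (n+1))) Rd with hB2def
  have hB2fin : μ B2 ≠ ⊤ := measure_ball_lt_top.ne
  have hB1fin : μ B1 ≠ ⊤ := measure_ball_lt_top.ne
  have hAfin : μ (B2 \ B1) ≠ ⊤ := ((measure_mono Set.diff_subset).trans_lt hB2fin.lt_top).ne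
  set e : ℝ := Real.exp (-Rd ^ 2 / 16) with hedef
  have hepos : 0 < e := Real.exp_pos _
  set M : ℝ := (μ B1).toReal with hMdef
  have hMpos : 0 < M := ENNReal.toReal_pos hpos.ne' hB1fin
  -- cutoff bounds
  have hcle : ∀ x, cutoff n Rd x ≤ 1 := by
    intro x
    unfold cutoff
    split_ifs with h1 h2
    · exact le_refl 1
    · push_neg at h1
      have h4 : 1 ≤ 2 / Rd * ‖x‖ := by
        rw [div_mul_eq_mul_div, le_div_iff₀ hRd]; linarith
      linarith
    · norm_num
  have hc0 : ∀ x, 0 ≤ cutoff n Rd x := cutoff_nonneg n Rd hRd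
  -- g and its bounds
  set g : EuclideanSpace ℝ (Fin (n+1)) → ℝ := fun x => (cutoff n Rd x)^2 * Phi n x with hgdef
  have hg0 : ∀ x, 0 ≤ g x := fun x =>
    mul_nonneg (sq_nonneg _) (Phi_pos n x).le
  have hg1 : ∀ x, g x ≤ 1 := by
    intro x
    have h1 := hc0 x; have h2 := hcle x; have h3 := Phi_pos n x; have h4 := Phi_le_one n x
    show cutoff n Rd x ^ 2 * Phi n x ≤ 1
    nlinarith [sq_nonneg (cutoff n Rd x), mul_nonneg h1 h1]
  have hgmeas : Measurable g :=
    ((cutoff_meas n Rd).pow_const 2).mul (Phi_cont n).measurable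
  have hgzero : ∀ x, x ∉ B2 → g x = 0 := by
    intro x hx
    rw [hmem] at hx; push_neg at hx
    have h1 : ¬ ‖x‖ < Rd / 2 := by push_neg; linarith
    have h2 : ¬ ‖x‖ < Rd := by push_neg; exact hx
    simp [hgdef, cutoff, h1, h2]
  have hgint : Integrable g μ := by
    have : g = B2.indicator g := by
      funext x
      by_cases hx : x ∈ B2
      · rw [Set.indicator_of_mem hx]
      · rw [Set.indicator_of_notMem hx, hgzero x hx]
    rw [this, integrable_indicator_iff measurableSet_ball]
    exact Measure.integrableOn_of_bounded hB2fin hgmeas.aestronglyMeasurable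
      (Filter.Eventually.of_forall fun x => by
        rw [Real.norm_eq_abs, abs_of_nonneg (hg0 x)]; exact hg1 x)
  -- Phi integrable on subsets of B2
  have hPhiIntOn : ∀ s : Set (EuclideanSpace ℝ (Fin (n+1))), μ s ≠ ⊤ →
      IntegrableOn (Phi n) s μ := by
    intro s hs
    exact Measure.integrableOn_of_bounded hs (Phi_cont n).measurable.aestronglyMeasurable
      (Filter.Eventually.of_forall fun x => by
        rw [Real.norm_eq_abs, abs_of_nonneg (Phi_pos n x).le]; exact Phi_le_one n x)
  -- first bound : annulus integral
  have hI1 : ∫ x in B2 \ B1, Phi n x ∂μ ≤ e * (μ (B2 \ B1)).toReal := by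
    have hmono : ∫ x in B2 \ B1, Phi n x ∂μ ≤ ∫ _x in B2 \ B1, e ∂μ := by
      apply setIntegral_mono_on (hPhiIntOn _ hAfin)
        (integrableOn_const hAfin)
        (measurableSet_ball.diff measurableSet_ball)
      intro x hx
      have hx1 : ¬ x ∈ B1 := hx.2
      rw [hmem] at hx1; push_neg at hx1
      rw [Phi, hedef]
      apply Real.exp_le_exp.2
      nlinarith [norm_nonneg x]
    rw [setIntegral_const, smul_eq_mul, mul_comm] at hmono
    exact hmono
  -- second bound : global integral of g from below
  have hI2 : e * M ≤ ∫ x, g x ∂μ := by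
    have step1 : e * M ≤ ∫ x in B1, Phi n x ∂μ := by
      have hmono : ∫ _x in B1, e ∂μ ≤ ∫ x in B1, Phi n x ∂μ := by
        apply setIntegral_mono_on (integrableOn_const hB1fin)
          (hPhiIntOn _ hB1fin) measurableSet_ball
        intro x hx
        rw [hmem] at hx
        rw [Phi, hedef]
        apply Real.exp_le_exp.2
        nlinarith [norm_nonneg x]
      rwa [setIntegral_const, smul_eq_mul, mul_comm] at hmono
    have step2 : ∫ x in B1, Phi n x ∂μ = ∫ x in B1, g x ∂μ := by
      apply setIntegral_congr_fun measurableSet_ball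
      intro x hx
      rw [hmem] at hx
      simp [hgdef, cutoff, hx]
    have step3 : ∫ x in B1, g x ∂μ ≤ ∫ x, g x ∂μ :=
      setIntegral_le_integral hgint (Filter.Eventually.of_forall hg0)
    linarith
  -- measure estimates
  have hmeas1 : (μ (B2 \ B1)).toReal ≤ (2:ℝ)^(2*n+3) * M := by
    have h1 : μ (B2 \ B1) ≤ μ B2 := measure_mono Set.diff_subset
    have h2 : (μ (B2 \ B1)).toReal ≤ ((2:ENNReal) ^ (2*n+3) * μ B1).toReal := by
      apply ENNReal.toReal_mono
      · exact ENNReal.mul_ne_top (by simp) hB1fin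
      · exact le_trans h1 hdoub
    rw [ENNReal.toReal_mul, ENNReal.toReal_pow] at h2
    simpa using h2
  -- arithmetic identity
  have hratio : (2:ℝ)^(2*n+5) / Rd ^ 2 = 1/8 := by
    rw [hRdDef, ← pow_mul]
    rw [show (n+4)*2 = (2*n+5)+3 by ring, pow_add]
    rw [div_eq_iff (by positivity)]
    ring
  have hcoef : 0 < 4 / Rd ^ 2 := by positivity
  constructor
  · have key : (4 / Rd ^ 2) * (∫ x in B2 \ B1, Phi n x ∂μ) - (1/2) * (∫ x, g x ∂μ)
        ≤ ((2:ℝ)^(2*n+5) / Rd ^ 2 - 1/2) * e * M := by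
      have t1 : (4 / Rd ^ 2) * (∫ x in B2 \ B1, Phi n x ∂μ)
          ≤ (4 / Rd ^ 2) * (e * ((2:ℝ)^(2*n+3) * M)) := by
        apply mul_le_mul_of_nonneg_left _ hcoef.le
        exact hI1.trans (mul_le_mul_of_nonneg_left hmeas1 hepos.le)
      have t2 : -(1/2) * (∫ x, g x ∂μ) ≤ -(1/2) * (e * M) := by
        nlinarith [hI2]
      have harith : (4 / Rd ^ 2) * (e * ((2:ℝ)^(2*n+3) * M)) - (1/2) * (e * M)
          = ((2:ℝ)^(2*n+5) / Rd ^ 2 - 1/2) * e * M := by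
        have : (2:ℝ)^(2*n+5) = 4 * (2:ℝ)^(2*n+3) := by
          rw [show 2*n+5 = (2*n+3)+2 by ring, pow_add]; ring
        rw [this]; field_simp
      linarith
    exact key
  · rw [hratio]
    nlinarith [mul_pos hepos hMpos]
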